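/- The on-policy IS stochastic softmax policy gradient is unbiased and has bounded second moment: for every θ ∈ ℝ^K, (i) Σ_{a∈[K]} π_θ(a)·g_a(θ) = d(π_θᵀ r)/dθ, i.e. Σ_a π_θ(a)·g_a(θ)(i) = π_θ(i)·(r(i) − π_θᵀ r) for every coordinate i ∈ [K]; and (ii) Σ_{a∈[K]} π_θ(a)·‖g_a(θ)‖₂² ≤ 2. -/
import Mathlib


open Finset Real Filter

/-- Softmax policy: `π_θ(a) = exp(θ(a)) / Σ_{a'} exp(θ(a'))`. -/
noncomputable def softmax {K : ℕ} (θ : Fin K → ℝ) (a : Fin K) : ℝ :=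
  Real.exp (θ a) / ∑ a', Real.exp (θ a')

/-- Expected reward `π_θᵀ r`. -/
noncomputable def expReward {K : ℕ} (r θ : Fin K → ℝ) : ℝ :=
  ∑ a, softmax θ a * r a

/-- Policy gradient component `(d π_θᵀ r / dθ)(a) = π_θ(a)·(r(a) − π_θᵀ r)`. -/
noncomputable def pgrad {K : ℕ} (r θ : Fin K → ℝ) (a : Fin K) : ℝ :=
  softmax θ a * (r a - expReward r θ)

/-- On-policy IS stochastic softmax policy gradient for sampled action `a`:
`g_a(θ)(i) = π_θ(i)·(r̂_a(i) − π_θᵀ r̂_a) = 1{i = a}·r(a) − π_θ(i)·r(a)`. -/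
noncomputable def stochPG {K : ℕ} (r : Fin K → ℝ) (a : Fin K) (θ : Fin K → ℝ)
    (i : Fin K) : ℝ :=
  (if i = a then r a else 0) - softmax θ i * r a

lemma softmax_pos {K : ℕ} (hK : 0 < K) (θ : Fin K → ℝ) (a : Fin K) :
    0 < softmax θ a := by
  apply div_pos (Real.exp_pos _)
  exact Finset.sum_pos (fun i _ => Real.exp_pos _) (by simp [Finset.univ_nonempty_iff, Fin.pos_iff_nonempty.mp hK])

lemma softmax_sum {K : ℕ} (hK : 0 < K) (θ : Fin K → ℝ) :
    ∑ a, softmax θ a = 1 := by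
  unfold softmax
  rw [← Finset.sum_div]
  apply div_self
  exact ne_of_gt (Finset.sum_pos (fun i _ => Real.exp_pos _)
    (by simp [Finset.univ_nonempty_iff, Fin.pos_iff_nonempty.mp hK]))

lemma softmax_le_one {K : ℕ} (hK : 0 < K) (θ : Fin K → ℝ) (a : Fin K) :
    softmax θ a ≤ 1 := by
  have h := softmax_sum hK θ
  have := Finset.single_le_sum (f := softmax θ) (fun i _ => (softmax_pos hK θ i).le)
    (Finset.mem_univ a)
  linarith

/-- The on-policy IS stochastic softmax policy gradient is unbiased
(`Σ_a π_θ(a)·g_a(θ) = d(π_θᵀ r)/dθ` componentwise) and has second moment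
bounded by `2` (`Σ_a π_θ(a)·‖g_a(θ)‖₂² ≤ 2`). -/
theorem stochastic_softmax_pg_unbiased_bounded
    {K : ℕ} (hK : 2 ≤ K) (r : Fin K → ℝ)
    (hr : ∀ a, 0 < r a ∧ r a ≤ 1)
    (θ : Fin K → ℝ) :
    (∀ i, ∑ a, softmax θ a * stochPG r a θ i = pgrad r θ i) ∧
    ∑ a, softmax θ a * (∑ i, stochPG r a θ i ^ 2) ≤ 2 := by
  have hK0 : 0 < K := by omega
  have hpos := softmax_pos hK0 θ
  have hle := softmax_le_one hK0 θ
  have hsum := softmax_sum hK0 θ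
  constructor
  · intro i
    unfold stochPG pgrad expReward
    rw [Finset.sum_congr rfl (fun a _ => mul_sub (softmax θ a) _ _)]
    rw [Finset.sum_sub_distrib]
    have h1 : ∑ a, softmax θ a * (if i = a then r a else 0) = softmax θ i * r i := by
      rw [Finset.sum_eq_single i]
      · simp
      · intro b _ hb; simp [Ne.symm hb]
      · simp
    rw [h1]
    have h2 : ∑ a, softmax θ a * (softmax θ i * r a) =
        softmax θ i * ∑ a, softmax θ a * r a := by
      rw [Finset.mul_sum]; congr 1; ext a; ring
    rw [h2]; ring
  · -- second moment bound
    have key : ∀ a : Fin K, ∑ i, stochPG r a θ i ^ 2 ≤ 2 := by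
      intro a
      have hra : 0 < r a ∧ r a ≤ 1 := hr a
      have habs : ∀ i : Fin K, stochPG r a θ i ^ 2 ≤ |(if i = a then (1:ℝ) else 0) - softmax θ i| := by
        intro i
        unfold stochPG
        have hx : (if i = a then r a else 0) - softmax θ i * r a =
            ((if i = a then (1:ℝ) else 0) - softmax θ i) * r a := by
          by_cases h : i = a <;> simp [h] <;> ring
        rw [hx]
        have h1 : |(if i = a then (1:ℝ) else 0) - softmax θ i| ≤ 1 := by
          rw [abs_le]
          by_cases h : i = a <;> simp [h] <;> constructor <;>
            linarith [hpos i, hle i, hpos a, hle a]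
        have h2 : |((if i = a then (1:ℝ) else 0) - softmax θ i) * r a| ≤
            |(if i = a then (1:ℝ) else 0) - softmax θ i| := by
          rw [abs_mul]
          calc |(if i = a then (1:ℝ) else 0) - softmax θ i| * |r a|
              ≤ |(if i = a then (1:ℝ) else 0) - softmax θ i| * 1 := by
                apply mul_le_mul_of_nonneg_left _ (abs_nonneg _)
                rw [abs_le]; constructor <;> linarith [hra.1, hra.2]
            _ = _ := mul_one _
        have h3 : |((if i = a then (1:ℝ) else 0) - softmax θ i) * r a| ≤ 1 :=
          le_trans h2 h1
        calc (((if i = a then (1:ℝ) else 0) - softmax θ i) * r a) ^ 2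
            = |((if i = a then (1:ℝ) else 0) - softmax θ i) * r a| *
              |((if i = a then (1:ℝ) else 0) - softmax θ i) * r a| := by
              rw [sq, ← abs_mul_abs_self]
          _ ≤ 1 * |((if i = a then (1:ℝ) else 0) - softmax θ i) * r a| :=
              mul_le_mul_of_nonneg_right h3 (abs_nonneg _)
          _ = |((if i = a then (1:ℝ) else 0) - softmax θ i) * r a| := one_mul _
          _ ≤ _ := h2
      have hval : ∀ i : Fin K, |(if i = a then (1:ℝ) else 0) - softmax θ i| =
          softmax θ i + (if i = a then 1 - 2 * softmax θ a else 0) := by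
        intro i
        by_cases h : i = a
        · subst h
          rw [if_pos rfl, if_pos rfl, abs_of_nonneg (by linarith [hle i])]
          ring
        · rw [if_neg h, if_neg h, zero_sub, abs_neg, abs_of_nonneg (hpos i).le, add_zero]
      calc ∑ i, stochPG r a θ i ^ 2
          ≤ ∑ i, |(if i = a then (1:ℝ) else 0) - softmax θ i| :=
            Finset.sum_le_sum (fun i _ => habs i)
        _ = ∑ i, (softmax θ i + (if i = a then 1 - 2 * softmax θ a else 0)) :=
            Finset.sum_congr rfl (fun i _ => hval i)
        _ = 1 + (1 - 2 * softmax θ a) := by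
            rw [Finset.sum_add_distrib, hsum, Finset.sum_ite_eq' Finset.univ a]
            simp
        _ ≤ 2 := by linarith [hpos a]
    calc ∑ a, softmax θ a * (∑ i, stochPG r a θ i ^ 2)
        ≤ ∑ a, softmax θ a * 2 := by
          apply Finset.sum_le_sum
          intro a _
          exact mul_le_mul_of_nonneg_left (key a) (hpos a).le
      _ = 2 := by rw [← Finset.sum_mul, hsum, one_mul]
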